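/- In the Artin-Schreier tower over F_p, for every i ≥ 0 and every m ≥ 1, one has c_i^m ∈ L_{i-1} if and only if c_i^(m(N_i - (p^(p^i) - 1))) = a_{i-1}^m. -/

import Mathlib

set_option maxHeartbeats 1000000
set_option synthInstance.maxHeartbeats 400000

open Finset Polynomial

section ASTower

noncomputable def aa (p : ℕ) [Fact p.Prime] (c : ℕ → AlgebraicClosure (ZMod p)) (i : ℕ) :
    AlgebraicClosure (ZMod p) := (∏ j ∈ Finset.range i, c j) ^ (p - 1)

noncomputable def SS (p : ℕ) [Fact p.Prime] (c : ℕ → AlgebraicClosure (ZMod p)) (i k : ℕ) :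
    AlgebraicClosure (ZMod p) := ∑ l ∈ Finset.range k, aa p c i ^ p ^ l

variable {p : ℕ} [hp : Fact p.Prime] {c : ℕ → AlgebraicClosure (ZMod p)}
  (hc : ∀ i, c i ^ p - c i = (∏ j ∈ Finset.range i, c j) ^ (p - 1))

include hc in
lemma hcp (i : ℕ) : c i ^ p = c i + aa p c i := by
  have := hc i; rw [sub_eq_iff_eq_add] at this; rw [this, aa]; ring

lemma ppow_fix {x : AlgebraicClosure (ZMod p)} (h : x ^ p = x) (u : ℕ) : x ^ p ^ u = x := by
  induction u with
  | zero => simp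
  | succ n ih => rw [pow_succ, pow_mul, ih, h]

lemma pow_fix_iter {x : AlgebraicClosure (ZMod p)} {k : ℕ} (h : x ^ p ^ k = x) (t : ℕ) :
    x ^ p ^ (t * k) = x := by
  induction t with
  | zero => simp
  | succ n ih => rw [Nat.succ_mul, pow_add, pow_mul, ih, h]

lemma frob_sum (f : ℕ → AlgebraicClosure (ZMod p)) (s : Finset ℕ) (k : ℕ) :
    (∑ l ∈ s, f l) ^ p ^ k = ∑ l ∈ s, f l ^ p ^ k := by
  have := map_sum (iterateFrobenius (AlgebraicClosure (ZMod p)) p k) f s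
  simpa only [iterateFrobenius_def] using this

lemma frob_sum1 (f : ℕ → AlgebraicClosure (ZMod p)) (s : Finset ℕ) :
    (∑ l ∈ s, f l) ^ p = ∑ l ∈ s, f l ^ p := by
  simpa using frob_sum f s 1

include hc in
lemma c_pow_ppow (i k : ℕ) : c i ^ p ^ k = c i + SS p c i k := by
  induction k with
  | zero => simp [SS]
  | succ n ih =>
      have h2 : (SS p c i n) ^ p = ∑ l ∈ range n, aa p c i ^ p ^ (l + 1) := by
        rw [SS, frob_sum1]
        refine Finset.sum_congr rfl fun l _ => ?_
        rw [← pow_mul, ← pow_succ]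
      rw [pow_succ, pow_mul, ih, add_pow_char, hcp hc i, h2, SS, Finset.sum_range_succ']
      rw [pow_zero, pow_one]
      ring

lemma SS_add (i k k' : ℕ) : SS p c i (k + k') = SS p c i k + (SS p c i k') ^ p ^ k := by
  rw [SS, SS, SS, Finset.sum_range_add, frob_sum]
  congr 1
  refine Finset.sum_congr rfl fun l _ => ?_
  rw [← pow_mul, ← pow_add, add_comm k l]

include hc in
lemma c_ne_zero (i : ℕ) : c i ≠ 0 := by
  induction i using Nat.strong_induction_on with
  | _ i ih =>
    intro h0
    have h1 := hcp hc i
    rw [h0, zero_pow hp.out.ne_zero, zero_add] at h1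
    have h2 : (∏ j ∈ Finset.range i, c j) ^ (p - 1) = 0 := by rw [← aa, ← h1]
    have h3 : ∏ j ∈ Finset.range i, c j = 0 :=
      pow_eq_zero_iff (by have := hp.out.two_le; omega : p - 1 ≠ 0) |>.mp h2
    obtain ⟨j, hj, hj0⟩ := Finset.prod_eq_zero_iff.mp h3
    exact ih j (Finset.mem_range.mp hj) hj0

include hc in
lemma aa_ne_zero (i : ℕ) : aa p c i ≠ 0 := by
  rw [aa]
  exact pow_ne_zero _ (Finset.prod_ne_zero_iff.mpr fun j _ => c_ne_zero hc j)

lemma sum_range_p_zmod (g : ZMod p → AlgebraicClosure (ZMod p)) :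
    ∑ v ∈ range p, g (v : ZMod p) = ∑ t : ZMod p, g t := by
  haveI : NeZero p := ⟨hp.out.ne_zero⟩
  refine Finset.sum_nbij' (fun v => ((v : ℕ) : ZMod p)) (fun t => ZMod.val t) ?_ ?_ ?_ ?_ ?_
  · intro a _; exact Finset.mem_univ _
  · intro t _; exact Finset.mem_range.mpr (ZMod.val_lt t)
  · intro a ha; exact ZMod.val_cast_of_lt (Finset.mem_range.mp ha)
  · intro t _; exact ZMod.natCast_rightInverse t
  · intro a _; rfl

lemma prod_range_p_zmod (g : ZMod p → AlgebraicClosure (ZMod p)) :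
    ∏ v ∈ range p, g (v : ZMod p) = ∏ t : ZMod p, g t := by
  haveI : NeZero p := ⟨hp.out.ne_zero⟩
  refine Finset.prod_nbij' (fun v => ((v : ℕ) : ZMod p)) (fun t => ZMod.val t) ?_ ?_ ?_ ?_ ?_
  · intro a _; exact Finset.mem_univ _
  · intro t _; exact Finset.mem_range.mpr (ZMod.val_lt t)
  · intro a ha; exact ZMod.val_cast_of_lt (Finset.mem_range.mp ha)
  · intro t _; exact ZMod.natCast_rightInverse t
  · intro a _; rfl

lemma zsum1 : ∑ t : ZMod p, t ^ (p - 1) = -1 := by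
  classical
  have h0 : (0 : ZMod p) ∈ (Finset.univ : Finset (ZMod p)) := Finset.mem_univ _
  rw [← Finset.sum_erase_add _ _ h0, zero_pow (by have := hp.out.two_le; omega : p - 1 ≠ 0),
    add_zero]
  rw [Finset.sum_congr rfl (fun t ht => ZMod.pow_card_sub_one_eq_one
    (Finset.ne_of_mem_erase ht))]
  rw [Finset.sum_const, Finset.card_erase_of_mem h0, nsmul_eq_mul, mul_one]
  have : (Finset.univ : Finset (ZMod p)).card = p := by
    haveI : NeZero p := ⟨hp.out.ne_zero⟩
    simp [ZMod.card]
  rw [this]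
  have h2 := hp.out.two_le
  push_cast [Nat.cast_sub (by omega : 1 ≤ p)]
  simp [ZMod.natCast_self]

lemma sumz (y : AlgebraicClosure (ZMod p)) :
    ∑ t : ZMod p, (y + algebraMap (ZMod p) (AlgebraicClosure (ZMod p)) t) ^ (p - 1) = -1 := by
  classical
  have hp2 := hp.out.two_le
  have hrange : p - 1 + 1 = p := by omega
  calc ∑ t : ZMod p, (y + algebraMap (ZMod p) _ t) ^ (p - 1)
      = ∑ t : ZMod p, ∑ k ∈ range p, y ^ k *
          (algebraMap (ZMod p) _ t) ^ (p - 1 - k) * ((p - 1).choose k) := by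
        refine Finset.sum_congr rfl fun t _ => ?_
        rw [add_pow, hrange]
    _ = ∑ k ∈ range p, ∑ t : ZMod p, y ^ k *
          (algebraMap (ZMod p) _ t) ^ (p - 1 - k) * ((p - 1).choose k) := Finset.sum_comm
    _ = ∑ k ∈ range p, y ^ k *
          algebraMap (ZMod p) _ (∑ t : ZMod p, t ^ (p - 1 - k)) * ((p - 1).choose k) := by
        refine Finset.sum_congr rfl fun k _ => ?_
        rw [map_sum, Finset.mul_sum, Finset.sum_mul]
        refine Finset.sum_congr rfl fun t _ => ?_
        rw [map_pow]
    _ = -1 := by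
        rw [Finset.sum_eq_single_of_mem 0 (Finset.mem_range.mpr hp.out.pos)]
        · rw [pow_zero, Nat.sub_zero, zsum1, one_mul, Nat.choose_zero_right, Nat.cast_one,
            mul_one, map_neg, map_one]
        · intro k hk hk0
          have hkr := Finset.mem_range.mp hk
          have : ∑ t : ZMod p, t ^ (p - 1 - k) = 0 := by
            have := FiniteField.sum_pow_lt_card_sub_one (K := ZMod p) (p - 1 - k)
              (by rw [ZMod.card]; omega)
            exact this
          rw [this, map_zero, mul_zero, zero_mul]

lemma s1 (y : AlgebraicClosure (ZMod p)) :
    ∑ v ∈ range p, (y + (v : AlgebraicClosure (ZMod p))) ^ (p - 1) = -1 := by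
  rw [← sumz (p := p) y,
    ← sum_range_p_zmod (g := fun t => (y + algebraMap (ZMod p) _ t) ^ (p - 1))]
  refine Finset.sum_congr rfl fun v _ => ?_
  rw [map_natCast]

lemma sumkey (x e : AlgebraicClosure (ZMod p)) (he : e ^ (p - 1) = 1) :
    ∑ v ∈ range p, (x + (v : AlgebraicClosure (ZMod p)) * e) ^ (p - 1) = -1 := by
  have hp2 := hp.out.two_le
  have he0 : e ≠ 0 := by
    rintro rfl
    rw [zero_pow (by omega : p - 1 ≠ 0)] at he
    exact zero_ne_one he
  have key : ∀ v : ℕ, x + (v : AlgebraicClosure (ZMod p)) * e = e * (x / e + v) := by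
    intro v; field_simp; try ring
  calc ∑ v ∈ range p, (x + (v : AlgebraicClosure (ZMod p)) * e) ^ (p - 1)
      = ∑ v ∈ range p, e ^ (p - 1) * (x / e + v) ^ (p - 1) := by
        refine Finset.sum_congr rfl fun v _ => ?_
        rw [key v, mul_pow]
    _ = -1 := by
        simp only [he, one_mul]
        exact s1 _

lemma prodz_poly : ∏ t : ZMod p, (X - C t) = X ^ p - X := by
  classical
  have hcard : Fintype.card (ZMod p) = p := ZMod.card p
  have hq : (X ^ p - X : (ZMod p)[X]) = X ^ Fintype.card (ZMod p) - X := by rw [hcard]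
  have hmonic : (X ^ Fintype.card (ZMod p) - X : (ZMod p)[X]).Monic := by
    apply Polynomial.monic_X_pow_sub
    rw [degree_X, hcard]
    exact_mod_cast hp.out.one_lt
  have hdeg : (X ^ Fintype.card (ZMod p) - X : (ZMod p)[X]).natDegree = Fintype.card (ZMod p) :=
    FiniteField.X_pow_card_sub_X_natDegree_eq _ Fintype.one_lt_card
  have hroots := FiniteField.roots_X_pow_card_sub_X (ZMod p)
  have hsplits : Splits (X ^ Fintype.card (ZMod p) - X : (ZMod p)[X]) := by
    rw [splits_iff_card_roots, hroots, hdeg]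
    simp [Finset.card_univ]
  have := hsplits.eq_prod_roots_of_monic hmonic
  rw [hroots] at this
  rw [hq, this]
  rfl

lemma prodz (y : AlgebraicClosure (ZMod p)) :
    ∏ t : ZMod p, (y - algebraMap (ZMod p) (AlgebraicClosure (ZMod p)) t) = y ^ p - y := by
  have := congrArg (Polynomial.aeval y (R := ZMod p) (A := AlgebraicClosure (ZMod p)))
    (prodz_poly (p := p))
  rw [map_prod] at this
  simpa using this

lemma p1 (y : AlgebraicClosure (ZMod p)) :
    ∏ v ∈ range p, (y + (v : AlgebraicClosure (ZMod p))) = y ^ p - y := by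
  rw [show ∏ v ∈ range p, (y + (v : AlgebraicClosure (ZMod p)))
      = ∏ t : ZMod p, (y + algebraMap (ZMod p) _ t) from ?_]
  · rw [← prodz (p := p) y]
    apply Finset.prod_equiv (Equiv.neg (ZMod p)) (by simp)
    intro t _
    simp [sub_eq_add_neg]
  · rw [← prod_range_p_zmod (g := fun t => (y + algebraMap (ZMod p) _ t))]
    refine Finset.prod_congr rfl fun v _ => ?_
    rw [map_natCast]

lemma prodkey (x e : AlgebraicClosure (ZMod p)) (he : e ^ (p - 1) = 1) :
    ∏ v ∈ range p, (x + (v : AlgebraicClosure (ZMod p)) * e) = x ^ p - x := by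
  have hp2 := hp.out.two_le
  have he0 : e ≠ 0 := by
    rintro rfl
    rw [zero_pow (by omega : p - 1 ≠ 0)] at he
    exact zero_ne_one he
  have hep : e ^ p = e := by
    have : e ^ p = e ^ (p - 1) * e := by
      rw [← pow_succ]; congr 1; omega
    rw [this, he, one_mul]
  have key : ∀ v : ℕ, x + (v : AlgebraicClosure (ZMod p)) * e = e * (x / e + v) := by
    intro v; field_simp; try ring
  calc ∏ v ∈ range p, (x + (v : AlgebraicClosure (ZMod p)) * e)
      = ∏ v ∈ range p, (e * (x / e + v)) := Finset.prod_congr rfl fun v _ => key v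
    _ = e ^ p * ((x / e) ^ p - x / e) := by
        rw [Finset.prod_mul_distrib, Finset.prod_const, Finset.card_range, p1]
    _ = x ^ p - x := by
        rw [mul_sub, ← mul_pow, mul_div_cancel₀ _ he0, hep]
        rw [mul_comm e (x / e), div_mul_cancel₀ x he0]

lemma epow (j : ℕ) : ((-1 : AlgebraicClosure (ZMod p)) ^ j) ^ (p - 1) = 1 := by
  rcases hp.out.eq_two_or_odd' with h2 | hodd
  · subst h2
    simp [CharTwo.neg_eq]
  · have heven : Even (p - 1) := Nat.Odd.sub_odd hodd odd_one
    rw [← pow_mul, mul_comm, pow_mul, heven.neg_one_pow, one_pow]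

lemma neg_one_j_ppow (j u : ℕ) :
    ((-1 : AlgebraicClosure (ZMod p)) ^ j) ^ p ^ u = (-1 : AlgebraicClosure (ZMod p)) ^ j := by
  rw [← pow_mul, mul_comm, pow_mul, neg_one_pow_char_pow]

lemma SS_mul (j : ℕ) (hk : SS p c j (p ^ j) = (-1) ^ j) (t : ℕ) :
    SS p c j (t * p ^ j) = (t : AlgebraicClosure (ZMod p)) * (-1) ^ j := by
  induction t with
  | zero => simp [SS]
  | succ n ih =>
      rw [Nat.succ_mul, SS_add, ih, hk, neg_one_j_ppow]
      push_cast
      ring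

lemma cfix (i : ℕ) (hkey : ∀ j < i, SS p c j (p ^ j) = (-1) ^ j)
    (hc : ∀ i, c i ^ p - c i = (∏ j ∈ Finset.range i, c j) ^ (p - 1))
    (j : ℕ) (hj : j < i) : c j ^ p ^ p ^ i = c j := by
  have h0 : SS p c j (p ^ i) = 0 := by
    have h1 := SS_mul j (hkey j hj) (p ^ (i - j))
    rw [← pow_add] at h1
    rw [show i - j + j = i by omega] at h1
    rw [h1, Nat.cast_pow, CharP.cast_eq_zero (AlgebraicClosure (ZMod p)) p,
      zero_pow (by omega : i - j ≠ 0), zero_mul]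
  rw [c_pow_ppow hc, h0, add_zero]

lemma afix (j : ℕ) (hkey : ∀ j' < j, SS p c j' (p ^ j') = (-1) ^ j')
    (hc : ∀ i, c i ^ p - c i = (∏ j ∈ Finset.range i, c j) ^ (p - 1)) :
    aa p c j ^ p ^ p ^ j = aa p c j := by
  rw [aa, ← pow_mul, mul_comm, pow_mul, ← Finset.prod_pow]
  rw [Finset.prod_congr rfl fun s hs => cfix j hkey hc s (Finset.mem_range.mp hs)]

lemma SS_blocks (i P t : ℕ) :
    SS p c i (t * P) = ∑ v ∈ range t, (SS p c i P) ^ p ^ (v * P) := by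
  induction t with
  | zero => simp [SS]
  | succ n ih => rw [Nat.succ_mul, SS_add, ih, Finset.sum_range_succ]

include hc in
theorem key : ∀ i, SS p c i (p ^ i) = (-1) ^ i := by
  intro i
  induction i using Nat.strong_induction_on with
  | _ i ih =>
    match i with
    | 0 => simp [SS, aa]
    | (j + 1) =>
      have hkj : SS p c j (p ^ j) = (-1) ^ j := ih j (Nat.lt_succ_self j)
      have haj : aa p c j ^ p ^ p ^ j = aa p c j :=
        afix j (fun j' hj' => ih j' (lt_trans hj' (Nat.lt_succ_self j))) hc
      have hepow : ((-1 : AlgebraicClosure (ZMod p)) ^ j) ^ (p - 1) = 1 := epow j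
      have hblock : ∀ v : ℕ, (SS p c (j + 1) (p ^ j)) ^ p ^ (v * p ^ j)
          = ∑ u ∈ range (p ^ j),
              (aa p c j * (c j + (v : AlgebraicClosure (ZMod p)) * (-1) ^ j) ^ (p - 1)) ^ p ^ u := by
        intro v
        rw [SS, frob_sum]
        refine Finset.sum_congr rfl fun u _ => ?_
        rw [← pow_mul, mul_comm (p ^ u), pow_mul]
        congr 1
        have h1 : aa p c (j + 1) = aa p c j * c j ^ (p - 1) := by
          rw [aa, aa, Finset.prod_range_succ, mul_pow]
        rw [h1, mul_pow, pow_fix_iter haj v, ← pow_mul, mul_comm (p - 1), pow_mul,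
          c_pow_ppow hc, SS_mul j hkj v]
      calc SS p c (j + 1) (p ^ (j + 1))
          = ∑ v ∈ range p, (SS p c (j + 1) (p ^ j)) ^ p ^ (v * p ^ j) := by
            rw [pow_succ']
            exact SS_blocks (j + 1) (p ^ j) p
        _ = ∑ v ∈ range p, ∑ u ∈ range (p ^ j),
              (aa p c j * (c j + (v : AlgebraicClosure (ZMod p)) * (-1) ^ j) ^ (p - 1)) ^ p ^ u :=
            Finset.sum_congr rfl fun v _ => hblock v
        _ = ∑ u ∈ range (p ^ j), (∑ v ∈ range p,
              aa p c j * (c j + (v : AlgebraicClosure (ZMod p)) * (-1) ^ j) ^ (p - 1)) ^ p ^ u := by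
            rw [Finset.sum_comm]
            exact Finset.sum_congr rfl fun u _ => (frob_sum _ _ _).symm
        _ = ∑ u ∈ range (p ^ j), (-(aa p c j)) ^ p ^ u := by
            refine Finset.sum_congr rfl fun u _ => ?_
            congr 1
            rw [← Finset.mul_sum, sumkey (c j) ((-1) ^ j) hepow, mul_neg_one]
        _ = (-1) ^ (j + 1) := by
            have : ∀ u : ℕ, (-(aa p c j)) ^ p ^ u = -(aa p c j ^ p ^ u) := by
              intro u
              rw [neg_eq_neg_one_mul, mul_pow, neg_one_pow_char_pow, neg_one_mul]
            rw [Finset.sum_congr rfl fun u _ => this u, Finset.sum_neg_distrib]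
            rw [← SS, hkj]
            ring

lemma zmod_ppow (r : ZMod p) (t : ℕ) : r ^ p ^ t = r := by
  induction t with
  | zero => simp
  | succ n ih => rw [pow_succ, pow_mul, ih, ZMod.pow_card]

lemma adjoin_fix {s : Set (AlgebraicClosure (ZMod p))} (t : ℕ)
    (hgen : ∀ y ∈ s, y ^ p ^ t = y) {x : AlgebraicClosure (ZMod p)}
    (hx : x ∈ Algebra.adjoin (ZMod p) s) : x ^ p ^ t = x := by
  induction hx using Algebra.adjoin_induction with
  | mem y hy => exact hgen y hy
  | algebraMap r => rw [← map_pow, zmod_ppow]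
  | add u v hu hv ihu ihv => rw [add_pow_char_pow, ihu, ihv]
  | mul u v hu hv ihu ihv => rw [mul_pow, ihu, ihv]

lemma card_le_q (s : Finset (AlgebraicClosure (ZMod p))) (q : ℕ) (hq : 1 < q)
    (hroots : ∀ y ∈ s, y ^ q = y) : s.card ≤ q := by
  classical
  have hP0 : (X ^ q - X : (AlgebraicClosure (ZMod p))[X]) ≠ 0 :=
    FiniteField.X_pow_card_sub_X_ne_zero _ hq
  have hdeg : (X ^ q - X : (AlgebraicClosure (ZMod p))[X]).natDegree = q :=
    FiniteField.X_pow_card_sub_X_natDegree_eq _ hq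
  have hsub : s ⊆ (X ^ q - X : (AlgebraicClosure (ZMod p))[X]).roots.toFinset := by
    intro y hy
    rw [Multiset.mem_toFinset, mem_roots hP0]
    simp [IsRoot.def, sub_eq_zero, hroots y hy]
  calc s.card ≤ _ := Finset.card_le_card hsub
    _ ≤ (X ^ q - X : (AlgebraicClosure (ZMod p))[X]).roots.card := Multiset.toFinset_card_le _
    _ ≤ _ := (Polynomial.card_roots' _)
    _ = q := hdeg

lemma mem_of_root (s : Finset (AlgebraicClosure (ZMod p))) (q : ℕ) (hq : 1 < q)
    (hcard : s.card = q) (hroots : ∀ y ∈ s, y ^ q = y)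
    (x : AlgebraicClosure (ZMod p)) (hx : x ^ q = x) : x ∈ s := by
  classical
  have hP0 : (X ^ q - X : (AlgebraicClosure (ZMod p))[X]) ≠ 0 :=
    FiniteField.X_pow_card_sub_X_ne_zero _ hq
  have hdeg : (X ^ q - X : (AlgebraicClosure (ZMod p))[X]).natDegree = q :=
    FiniteField.X_pow_card_sub_X_natDegree_eq _ hq
  have hsub : s ⊆ (X ^ q - X : (AlgebraicClosure (ZMod p))[X]).roots.toFinset := by
    intro y hy
    rw [Multiset.mem_toFinset, mem_roots hP0]
    simp [IsRoot.def, sub_eq_zero, hroots y hy]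
  have hcard2 : (X ^ q - X : (AlgebraicClosure (ZMod p))[X]).roots.toFinset.card ≤ s.card := by
    rw [hcard]
    exact le_trans (Multiset.toFinset_card_le _) (le_trans (Polynomial.card_roots' _) hdeg.le)
  have heq : s = (X ^ q - X : (AlgebraicClosure (ZMod p))[X]).roots.toFinset :=
    Finset.eq_of_subset_of_card_le hsub hcard2
  rw [heq, Multiset.mem_toFinset, mem_roots hP0]
  simp [IsRoot.def, sub_eq_zero, hx]

lemma G_add {j k k' : ℕ} (h : SS p c j k = 0) (h' : SS p c j k' = 0) :
    SS p c j (k + k') = 0 := by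
  rw [SS_add, h, h', zero_pow (pow_ne_zero _ hp.out.ne_zero), add_zero]

lemma G_sub {j k k' : ℕ} (hle : k ≤ k') (h : SS p c j k = 0) (h' : SS p c j k' = 0) :
    SS p c j (k' - k) = 0 := by
  have h2 : SS p c j (k + (k' - k)) = SS p c j k + (SS p c j (k' - k)) ^ p ^ k := SS_add _ _ _
  rw [Nat.add_sub_cancel' hle, h', h, zero_add] at h2
  exact pow_eq_zero_iff (pow_ne_zero _ hp.out.ne_zero) |>.mp h2.symm

lemma G_mul {j k : ℕ} (h : SS p c j k = 0) (t : ℕ) : SS p c j (t * k) = 0 := by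
  induction t with
  | zero => simp [SS]
  | succ n ih => rw [Nat.succ_mul]; exact G_add ih h

lemma G_mod {j k k' : ℕ} (h : SS p c j k = 0) (h' : SS p c j k' = 0) :
    SS p c j (k' % k) = 0 := by
  have hd := Nat.div_add_mod k' k
  have h2 : k' - k * (k' / k) = k' % k :=
    Nat.sub_eq_of_eq_add (by rw [add_comm]; exact hd.symm)
  rw [← h2]
  have hmul : SS p c j (k * (k' / k)) = 0 := by rw [mul_comm]; exact G_mul h (k' / k)
  exact G_sub (by rw [mul_comm]; exact Nat.div_mul_le_self k' k) hmul h'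

lemma G_gcd {j : ℕ} : ∀ a b : ℕ, SS p c j a = 0 → SS p c j b = 0 →
    SS p c j (Nat.gcd a b) = 0 := by
  intro a
  induction a using Nat.strong_induction_on with
  | _ a iha =>
    intro b ha hb
    match a, ha with
    | 0, _ => simpa using hb
    | (a' + 1), ha =>
      rw [Nat.gcd_rec]
      exact iha (b % (a' + 1)) (Nat.mod_lt _ (Nat.succ_pos a')) (a' + 1) (G_mod ha hb) ha

lemma dvd_of_SS_eq_zero {j k : ℕ} (hkj : SS p c j (p ^ j) = (-1) ^ j)
    (h : SS p c j k = 0) : p ^ (j + 1) ∣ k := by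
  have hGp : SS p c j (p ^ (j + 1)) = 0 := by
    have := SS_mul j hkj p
    rw [← pow_succ'] at this
    rw [this, CharP.cast_eq_zero (AlgebraicClosure (ZMod p)) p, zero_mul]
  have hg : SS p c j (Nat.gcd k (p ^ (j + 1))) = 0 := G_gcd _ _ h hGp
  obtain ⟨s, hs, hgs⟩ := (Nat.dvd_prime_pow hp.out).mp (Nat.gcd_dvd_right k (p ^ (j + 1)))
  by_cases hsj : s ≤ j
  · exfalso
    have : SS p c j (p ^ j) = 0 := by
      have := G_mul (hgs ▸ hg) (p ^ (j - s))
      rw [← pow_add] at this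
      rwa [show j - s + s = j by omega] at this
    rw [hkj] at this
    exact pow_ne_zero j (neg_ne_zero.mpr one_ne_zero) this
  · have : s = j + 1 := by omega
    subst this
    exact hgs ▸ Nat.gcd_dvd_left k (p ^ (j + 1))

end ASTower

theorem c_pow_mem_iff (p : ℕ) [Fact p.Prime]
    (c : ℕ → AlgebraicClosure (ZMod p))
    (hc : ∀ i, c i ^ p - c i = (∏ j ∈ Finset.range i, c j) ^ (p - 1))
    (i : ℕ) (m : ℕ) (hm : 1 ≤ m) :
    c i ^ m ∈ Algebra.adjoin (ZMod p) {x | ∃ j < i, x = c j} ↔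
      c i ^ (m * ((∑ j ∈ Finset.range p, (p ^ p ^ i) ^ j) - (p ^ p ^ i - 1))) =
        ((∏ j ∈ Finset.range i, c j) ^ (p - 1)) ^ m := by
  classical
  have hp2 := (Fact.out : p.Prime).two_le
  set q : ℕ := p ^ p ^ i with hqdef
  set N : ℕ := ∑ j ∈ Finset.range p, q ^ j with hNdef
  have hkey := key hc
  have hq1 : 1 < q := Nat.one_lt_pow (Nat.pow_pos (by omega : 0 < p)).ne' (by omega)
  have hAne : aa p c i ≠ 0 := aa_ne_zero hc i
  have hcne : c i ≠ 0 := c_ne_zero hc i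
  have hcq : ∀ v : ℕ, c i ^ q ^ v = c i + (v : AlgebraicClosure (ZMod p)) * (-1) ^ i := by
    intro v
    have h1 : q ^ v = p ^ (v * p ^ i) := by rw [hqdef, ← pow_mul, mul_comm (p ^ i) v]
    rw [h1, c_pow_ppow hc, SS_mul i (hkey i) v]
  have hNpow : c i ^ N = aa p c i := by
    rw [hNdef, ← Finset.prod_pow_eq_pow_sum,
      Finset.prod_congr rfl fun v _ => hcq v, prodkey (c i) ((-1) ^ i) (epow i), hc i, aa]
  have hqN : q - 1 ≤ N := by
    have h1 : q ^ 1 ≤ N :=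
      Finset.single_le_sum (f := fun v => q ^ v) (fun v _ => Nat.zero_le _)
        (Finset.mem_range.mpr (by omega))
    rw [pow_one] at h1; omega
  have hsplit : m * (N - (q - 1)) + m * (q - 1) = m * N := by
    rw [← Nat.mul_add, Nat.sub_add_cancel hqN]
  have hmN : c i ^ (m * N) = (aa p c i) ^ m := by
    rw [mul_comm, pow_mul, hNpow]
  have hrhs : ((∏ j ∈ Finset.range i, c j) ^ (p - 1)) ^ m = (aa p c i) ^ m := rfl
  have hfix_iff : (c i ^ (m * (N - (q - 1))) = ((∏ j ∈ Finset.range i, c j) ^ (p - 1)) ^ m)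
      ↔ (c i ^ m) ^ q = c i ^ m := by
    rw [hrhs]
    constructor
    · intro h
      have h2 : aa p c i ^ m = aa p c i ^ m * c i ^ (m * (q - 1)) := by
        calc aa p c i ^ m = c i ^ (m * N) := hmN.symm
          _ = c i ^ (m * (N - (q - 1))) * c i ^ (m * (q - 1)) := by rw [← pow_add, hsplit]
          _ = aa p c i ^ m * c i ^ (m * (q - 1)) := by rw [h]
      have h3 : (1 : AlgebraicClosure (ZMod p)) = c i ^ (m * (q - 1)) :=
        mul_left_cancel₀ (pow_ne_zero m hAne) (by rw [mul_one]; exact h2)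
      calc (c i ^ m) ^ q = (c i ^ m) ^ (q - 1) * c i ^ m := by
            rw [← pow_succ]; congr 1; omega
        _ = c i ^ (m * (q - 1)) * c i ^ m := by rw [← pow_mul]
        _ = c i ^ m := by rw [← h3, one_mul]
    · intro h
      have h3 : c i ^ (m * (q - 1)) = 1 := by
        have h4 : c i ^ (m * (q - 1)) * c i ^ m = 1 * c i ^ m := by
          rw [one_mul]
          calc c i ^ (m * (q - 1)) * c i ^ m = c i ^ (m * (q - 1) + m) := (pow_add _ _ _).symm
            _ = (c i ^ m) ^ q := by
                rw [show m * (q - 1) + m = m * q by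
                  rw [← Nat.mul_succ]; congr 1; omega, ← pow_mul,
                  mul_comm m q, pow_mul]
            _ = c i ^ m := h
        exact mul_right_cancel₀ (pow_ne_zero m hcne) h4
      rw [← hmN, ← hsplit, pow_add, h3, mul_one]
  have hmem_iff : (c i ^ m ∈ Algebra.adjoin (ZMod p) {x | ∃ j < i, x = c j})
      ↔ (c i ^ m) ^ q = c i ^ m := by
    constructor
    · intro h
      rw [hqdef]
      refine adjoin_fix (t := p ^ i) ?_ h
      rintro y ⟨j, hj, rfl⟩
      exact cfix i (fun j' hj' => hkey j') hc j hj
    · intro hxq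
      by_cases hi0 : i = 0
      · subst hi0
        have hqp : q = p := by rw [hqdef, pow_zero, pow_one]
        set s0 : Finset (AlgebraicClosure (ZMod p)) :=
          Finset.univ.image (algebraMap (ZMod p) (AlgebraicClosure (ZMod p))) with hs0
        have hcard : s0.card = q := by
          rw [hs0, Finset.card_image_of_injective _ (algebraMap (ZMod p) _).injective,
            Finset.card_univ, ZMod.card, hqp]
        have hroots : ∀ y ∈ s0, y ^ q = y := by
          intro y hy
          obtain ⟨t, -, rfl⟩ := Finset.mem_image.mp hy
          rw [← map_pow, hqdef, zmod_ppow]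
        have hmem := mem_of_root s0 q hq1 hcard hroots _ hxq
        obtain ⟨t, -, ht⟩ := Finset.mem_image.mp hmem
        rw [← ht]
        exact Subalgebra.algebraMap_mem _ t
      · obtain ⟨j, rfl⟩ : ∃ j, i = j + 1 := ⟨i - 1, by omega⟩
        have hcjq : c j ^ q = c j := by
          rw [hqdef]
          exact cfix (j + 1) (fun j' hj' => hkey j') hc j (Nat.lt_succ_self j)
        have hint : IsIntegral (ZMod p) (c j) := by
          refine ⟨X ^ q - X, ?_, ?_⟩
          · apply Polynomial.monic_X_pow_sub
            rw [degree_X]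
            exact_mod_cast hq1
          · rw [eval₂_sub, eval₂_X_pow, eval₂_X, sub_eq_zero]
            exact hcjq
        set B := Algebra.adjoin (ZMod p) ({c j} : Set (AlgebraicClosure (ZMod p))) with hB
        haveI : FiniteDimensional (ZMod p) B := ⟨(Submodule.fg_top _).mpr hint.fg_adjoin_singleton⟩
        haveI : Finite B := Module.finite_of_finite (ZMod p)
        haveI : Fintype B := Fintype.ofFinite B
        letI : Field B := (Finite.isField_of_domain B).toField
        haveI : CharP B p := charP_of_injective_algebraMap (algebraMap (ZMod p) B).injective p
        obtain ⟨n, -, hcardB⟩ := FiniteField.card B p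
        have hBfix : ∀ y : AlgebraicClosure (ZMod p), y ∈ B → y ^ q = y := by
          intro y hy
          rw [hqdef]
          refine adjoin_fix (t := p ^ (j + 1)) ?_ hy
          intro z hz
          rw [Set.mem_singleton_iff] at hz
          rw [hz, ← hqdef]
          exact hcjq
        set sB : Finset (AlgebraicClosure (ZMod p)) :=
          Finset.univ.image (fun b : B => (b : AlgebraicClosure (ZMod p))) with hsB
        have hcards : sB.card = p ^ (n : ℕ) := by
          rw [hsB, Finset.card_image_of_injective _ Subtype.val_injective,
            Finset.card_univ, hcardB]
        have hrootsB : ∀ y ∈ sB, y ^ q = y := by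
          intro y hy
          obtain ⟨b, -, rfl⟩ := Finset.mem_image.mp hy
          exact hBfix _ b.2
        have hle : p ^ (n : ℕ) ≤ q := hcards ▸ card_le_q sB q hq1 hrootsB
        have hnle : (n : ℕ) ≤ p ^ (j + 1) := by
          rw [hqdef] at hle
          exact (Nat.pow_le_pow_iff_right (by omega : 1 < p)).mp hle
        have hmemB : c j ∈ B := Algebra.self_mem_adjoin_singleton _ _
        have hfixn : c j ^ p ^ (n : ℕ) = c j := by
          have hb := FiniteField.pow_card (⟨c j, hmemB⟩ : B)
          rw [hcardB] at hb
          have := congrArg (Subtype.val) hb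
          simpa using this
        have hSSn : SS p c j (n : ℕ) = 0 := by
          have h5 := c_pow_ppow hc j (n : ℕ)
          rw [hfixn] at h5
          exact (left_eq_add.mp h5)
        have hdvd : p ^ (j + 1) ∣ (n : ℕ) := dvd_of_SS_eq_zero (hkey j) hSSn
        have hn_eq : (n : ℕ) = p ^ (j + 1) :=
          Nat.le_antisymm hnle (Nat.le_of_dvd n.pos hdvd)
        have hcardq : sB.card = q := by rw [hcards, hn_eq, hqdef]
        have hxmem := mem_of_root sB q hq1 hcardq hrootsB _ hxq
        obtain ⟨b, -, hbx⟩ := Finset.mem_image.mp hxmem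
        have hxB : c (j + 1) ^ m ∈ B := hbx ▸ b.2
        have hBle : B ≤ Algebra.adjoin (ZMod p) {x | ∃ j' < j + 1, x = c j'} := by
          apply Algebra.adjoin_le
          intro z hz
          rw [Set.mem_singleton_iff] at hz
          rw [hz]
          exact Algebra.subset_adjoin ⟨j, Nat.lt_succ_self j, rfl⟩
        exact hBle hxB
  rw [hmem_iff]
  exact hfix_iff.symm
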